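/- If G is a tree, (G,S) is internally connected, and (u,v) is an edge on the unique simple path from u to a vertex t, then every category C ∈ S containing both u and t also contains v; hence |cat(t) ∩ cat(u)| ≤ |cat(t) ∩ cat(v)|. -/

import Mathlib

open Finset SimpleGraph

variable {V : Type*}

/-- The set of categories that `x` belongs to. -/
def cat [DecidableEq V] (S : Finset (Finset V)) (x : V) : Finset (Finset V) :=
  S.filter (fun C => x ∈ C)

/-- The category-based distance `d(s,t) = |cat(t) \ cat(s)|`. -/
def dd [DecidableEq V] (S : Finset (Finset V)) (s t : V) : ℕ :=
  (cat S t \ cat S s).card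

/-- `(G, S)` is shattered. -/
def Shattered [DecidableEq V] (G : SimpleGraph V) (S : Finset (Finset V)) : Prop :=
  ∀ s t : V, s ≠ t → ∃ u, G.Adj s u ∧ ∃ C ∈ S, u ∈ C ∧ t ∈ C ∧ s ∉ C

/-- `(G, S)` is internally connected: every category induces a connected subgraph. -/
def InternallyConnected (G : SimpleGraph V) (S : Finset (Finset V)) : Prop :=
  ∀ C ∈ S, (G.induce (C : Set V)).Preconnected

/-- Greedy routing can reach `t` from `s`: there is a path along which the
category distance to `t` strictly decreases at every step. -/
def RoutesTo [DecidableEq V] (G : SimpleGraph V) (S : Finset (Finset V)) (s t : V) : Prop :=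
  Relation.ReflTransGen (fun a b => G.Adj a b ∧ dd S b t < dd S a t) s t

/-- Greedy routing works between all pairs of vertices. -/
def RoutingWorks [DecidableEq V] (G : SimpleGraph V) (S : Finset (Finset V)) : Prop :=
  ∀ s t : V, s ≠ t → RoutesTo G S s t

/-- The membership dimension of a category system. -/
def memdim [DecidableEq V] [Fintype V] (S : Finset (Finset V)) : ℕ :=
  Finset.univ.sup fun u => (cat S u).card

/-- In a tree with an internally connected category system, if `(u,v)` is
an edge on the unique simple path from `u` to `t`, then every category containing both
`u` and `t` also contains `v`; hence `|cat(t) ∩ cat(u)| ≤ |cat(t) ∩ cat(v)|`. -/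
theorem tree_internally_connected_edge [DecidableEq V] (G : SimpleGraph V)
    (S : Finset (Finset V)) (hT : G.IsTree) (hIC : InternallyConnected G S)
    (u v t : V) (p : G.Walk u t) (hp : p.IsPath) (he : s(u, v) ∈ p.edges) :
    (∀ C ∈ S, u ∈ C → t ∈ C → v ∈ C) ∧
    (cat S t ∩ cat S u).card ≤ (cat S t ∩ cat S v).card := by
  have hv : v ∈ p.support := p.snd_mem_support_of_mem_edges he
  have key : ∀ C ∈ S, u ∈ C → t ∈ C → v ∈ C := by
    intro C hC hu ht
    obtain ⟨w⟩ := hIC C hC ⟨u, hu⟩ ⟨t, ht⟩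
    -- map the walk in the induced graph to a walk in G
    set w' : G.Walk u t := w.map (SimpleGraph.Embedding.induce (C : Set V)).toHom
    have hsup : ∀ x ∈ w'.support, x ∈ C := by
      intro x hx
      replace hx : x ∈ (w.map (SimpleGraph.Embedding.induce (C : Set V)).toHom).support := hx
      rw [SimpleGraph.Walk.support_map, List.mem_map] at hx
      obtain ⟨⟨y, hy⟩, _, rfl⟩ := hx
      exact hy
    have hq : w'.bypass.IsPath := w'.bypass_isPath
    have : p = w'.bypass := ((hT.existsUnique_path u t).unique hp hq)
    exact hsup v (w'.support_bypass_subset (this ▸ hv))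
  refine ⟨key, Finset.card_le_card ?_⟩
  intro C hC
  simp only [Finset.mem_inter, cat, Finset.mem_filter] at hC ⊢
  exact ⟨hC.1, hC.2.1, key C hC.1.1 hC.2.2 hC.1.2⟩
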